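/- Weak consistency of CFR(t): under assumption A1 and r_t → ∞, CFR(t) − cfr(t) converges to 0 in probability as t → ∞. -/

import Mathlib

open MeasureTheory ProbabilityTheory Finset Filter

/-- weak consistency of CFR(t): under A1 and r_t → ∞,
    CFR(t) − cfr(t) → 0 in probability as t → ∞. -/
theorem CFR_consistent
    {Ω : Type*} [MeasureSpace Ω] [IsProbabilityMeasure (ℙ : Measure Ω)]
    (c : ℕ → ℕ) (p : ℕ → ℝ) (F : ℕ → ℕ → ℝ) (D : ℝ)
    (M : ℕ → ℕ → ℕ → Ω → ℝ)  -- M t d i : death-by-day-t indicator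
    (r : ℕ → ℝ) (CFR : ℕ → Ω → ℝ) (cfr : ℕ → ℝ)
    (hr : ∀ t, r t = ∑ d ∈ Finset.range (t + 1), (c d : ℝ))
    (hCFR : ∀ t ω, CFR t ω = (∑ d ∈ Finset.range (t + 1),
        ∑ i ∈ Finset.range (c d), M t d i ω / F d (t - d)) / r t)
    (hcfr : ∀ t, cfr t = (∑ d ∈ Finset.range (t + 1), (c d : ℝ) * p d) / r t)
    (hMmeas : ∀ t d i, Measurable (M t d i))
    (hM01 : ∀ t d i ω, M t d i ω = 0 ∨ M t d i ω = 1)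
    (hE : ∀ t, ∀ d ∈ Finset.range (t + 1), ∀ i ∈ Finset.range (c d),
      (∫ ω, M t d i ω ∂ℙ) = p d * F d (t - d))
    (hIndep : ∀ t, iIndepFun
      (fun di : ℕ × ℕ => M t di.1 di.2) ℙ)
    -- A1 : inf_d F_d(0) = D > 0, F_d nondecreasing
    (hD : 0 < D) (hD0 : ∀ d, D ≤ F d 0) (hFmono : ∀ d, Monotone (F d))
    (hF1 : ∀ d k, F d k ≤ 1) (hp0 : ∀ d, 0 ≤ p d) (hp1 : ∀ d, p d ≤ 1)
    (hrinf : Tendsto r atTop atTop) :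
    ∀ ε > (0 : ℝ),
      Tendsto (fun t => ℙ {ω | ε ≤ |CFR t ω - cfr t|}) atTop (nhds 0) := by
  intro ε hε
  have hF : ∀ d t, 0 < F d (t - d : ℕ) := fun d t =>
    lt_of_lt_of_le hD ((hD0 d).trans (hFmono d (Nat.zero_le _)))
  have hM0 : ∀ t d i ω, 0 ≤ M t d i ω := by
    intro t d i ω; rcases hM01 t d i ω with h | h <;> rw [h] <;> norm_num
  have hM1 : ∀ t d i ω, M t d i ω ≤ 1 := by
    intro t d i ω; rcases hM01 t d i ω with h | h <;> rw [h] <;> norm_num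
  -- the main per-t bound
  have key : ∀ t : ℕ, 1 ≤ r t →
      ℙ {ω | ε ≤ |CFR t ω - cfr t|} ≤ ENNReal.ofReal ((D ^ 2 * ε ^ 2)⁻¹ * (r t)⁻¹) := by
    intro t hr1
    have hrpos : 0 < r t := lt_of_lt_of_le one_pos hr1
    classical
    set X : ℕ × ℕ → Ω → ℝ := fun di ω => M t di.1 di.2 ω / F di.1 (t - di.1) with hXdef
    set T : Finset (ℕ × ℕ) :=
      (Finset.range (t + 1)).biUnion (fun d => {d} ×ˢ Finset.range (c d)) with hTdef
    have hdisj : (Finset.range (t + 1) : Set ℕ).PairwiseDisjoint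
        (fun d => ({d} : Finset ℕ) ×ˢ Finset.range (c d)) := by
      intro a _ b _ hab
      simp only [Finset.disjoint_left]
      rintro ⟨x, y⟩ hx hy
      simp only [Finset.mem_product, Finset.mem_singleton] at hx hy
      exact hab (hx.1.symm.trans hy.1)
    have hTsum : ∀ (f : ℕ × ℕ → ℝ), ∑ di ∈ T, f di =
        ∑ d ∈ Finset.range (t + 1), ∑ i ∈ Finset.range (c d), f (d, i) := by
      intro f
      rw [hTdef, Finset.sum_biUnion hdisj]
      refine Finset.sum_congr rfl fun d _ => ?_
      rw [Finset.sum_product, Finset.sum_singleton]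
    have hmemT : ∀ di ∈ T, di.1 ∈ Finset.range (t + 1) ∧ di.2 ∈ Finset.range (c di.1) := by
      intro di hdi
      rw [hTdef, Finset.mem_biUnion] at hdi
      obtain ⟨d, hd, hdi⟩ := hdi
      simp only [Finset.mem_product, Finset.mem_singleton] at hdi
      obtain ⟨h1, h2⟩ := hdi
      exact ⟨h1 ▸ hd, h1 ▸ h2⟩
    -- bounds on X
    have hXbd : ∀ di ω, |X di ω| ≤ D⁻¹ := by
      intro di ω
      rw [hXdef]
      have hFpos := hF di.1 t
      rw [abs_of_nonneg (div_nonneg (hM0 _ _ _ _) hFpos.le)]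
      calc M t di.1 di.2 ω / F di.1 (t - di.1) ≤ 1 / D :=
            div_le_div₀ zero_le_one (hM1 _ _ _ _) hD
              ((hD0 di.1).trans (hFmono di.1 (Nat.zero_le _)))
        _ = D⁻¹ := one_div D
    have hXmeas : ∀ di, Measurable (X di) := fun di => (hMmeas t di.1 di.2).div_const _
    have hX2 : ∀ di, MemLp (X di) 2 ℙ := fun di =>
      MemLp.of_bound (hXmeas di).aestronglyMeasurable D⁻¹
        (Filter.Eventually.of_forall fun ω => by
          rw [Real.norm_eq_abs]; exact hXbd di ω)
    -- expectation of X
    have hEX : ∀ di ∈ T, (∫ ω, X di ω ∂ℙ) = p di.1 := by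
      intro di hdi
      obtain ⟨h1, h2⟩ := hmemT di hdi
      rw [hXdef]
      simp only
      rw [integral_div, hE t di.1 h1 di.2 h2]
      field_simp [(hF di.1 t).ne']
    -- variance bound on X
    have hVX : ∀ di, variance (X di) ℙ ≤ D⁻¹ ^ 2 := by
      intro di
      rw [variance_eq_sub (hX2 di)]
      have h1 : (∫ ω, (X di ω) ^ 2 ∂ℙ) ≤ D⁻¹ ^ 2 := by
        calc (∫ ω, (X di ω) ^ 2 ∂ℙ) ≤ ∫ _, D⁻¹ ^ 2 ∂ℙ := by
              apply integral_mono ((hX2 di).integrable_sq) (integrable_const _)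
              intro ω
              show X di ω ^ 2 ≤ D⁻¹ ^ 2
              rw [show X di ω ^ 2 = |X di ω| ^ 2 from (sq_abs _).symm]
              exact pow_le_pow_left₀ (abs_nonneg _) (hXbd di ω) 2
          _ = D⁻¹ ^ 2 := by simp
      have h2 : (0:ℝ) ≤ (∫ ω, X di ω ∂ℙ) ^ 2 := sq_nonneg _
      calc (∫ ω, (X di ω) ^ 2 ∂ℙ) - (∫ ω, X di ω ∂ℙ) ^ 2 ≤ ∫ ω, (X di ω) ^ 2 ∂ℙ := by linarith
        _ ≤ D⁻¹ ^ 2 := h1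
    -- S and its variance
    set S : Ω → ℝ := ∑ di ∈ T, X di with hSdef
    have hSval : ∀ ω, S ω = ∑ di ∈ T, X di ω := fun ω => by
      rw [hSdef]; simp [Finset.sum_apply]
    have hpair : Set.Pairwise (T : Set (ℕ × ℕ)) fun i j => IndepFun (X i) (X j) ℙ := by
      intro a _ b _ hab
      have h := (hIndep t).indepFun hab
      exact h.comp (measurable_id.div_const _) (measurable_id.div_const _)
    have hVS : variance S ℙ ≤ r t * D⁻¹ ^ 2 := by
      rw [hSdef, IndepFun.variance_sum (fun di _ => hX2 di) hpair]
      calc ∑ di ∈ T, variance (X di) ℙ ≤ ∑ di ∈ T, D⁻¹ ^ 2 :=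
            Finset.sum_le_sum fun di _ => hVX di
        _ = r t * D⁻¹ ^ 2 := by
            rw [hTsum fun _ => D⁻¹ ^ 2, hr, Finset.sum_mul]
            exact Finset.sum_congr rfl fun d _ => by
              simp [Finset.sum_const, nsmul_eq_mul]
    -- CFR = (r t)⁻¹ • S
    have hCFRS : CFR t = (r t)⁻¹ • S := by
      funext ω
      rw [hCFR, Pi.smul_apply, smul_eq_mul, hSval, hTsum (fun di => X di ω)]
      rw [div_eq_inv_mul]
    have hCFR2 : MemLp (CFR t) 2 ℙ := by
      rw [hCFRS]
      exact (memLp_finset_sum' _ fun di _ => hX2 di).const_smul _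
    -- expectation of CFR
    have hECFR : (∫ ω, CFR t ω ∂ℙ) = cfr t := by
      rw [hCFRS]
      simp only [Pi.smul_apply, smul_eq_mul]
      rw [integral_const_mul, hcfr, div_eq_inv_mul]
      congr 1
      rw [hSdef]
      simp only [Finset.sum_apply]
      rw [integral_finset_sum _ fun di _ => (hX2 di).integrable one_le_two]
      rw [Finset.sum_congr rfl hEX, hTsum fun di => p di.1]
      exact Finset.sum_congr rfl fun d _ => by simp [mul_comm]
    -- variance of CFR
    have hVCFR : variance (CFR t) ℙ ≤ (r t)⁻¹ * D⁻¹ ^ 2 := by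
      rw [hCFRS, variance_smul]
      calc (r t)⁻¹ ^ 2 * variance S ℙ ≤ (r t)⁻¹ ^ 2 * (r t * D⁻¹ ^ 2) := by
            apply mul_le_mul_of_nonneg_left hVS (sq_nonneg _)
        _ = (r t)⁻¹ * D⁻¹ ^ 2 := by field_simp
    -- Chebyshev
    have hcheb := meas_ge_le_variance_div_sq (μ := ℙ) hCFR2 hε
    rw [hECFR] at hcheb
    refine hcheb.trans (ENNReal.ofReal_le_ofReal ?_)
    rw [div_le_iff₀ (by positivity)]
    have : (D ^ 2 * ε ^ 2)⁻¹ * (r t)⁻¹ * ε ^ 2 = (r t)⁻¹ * D⁻¹ ^ 2 := by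
      field_simp
    rw [this]
    exact hVCFR
  -- conclude by squeezing
  have hbound : Tendsto (fun t => ENNReal.ofReal ((D ^ 2 * ε ^ 2)⁻¹ * (r t)⁻¹))
      atTop (nhds 0) := by
    have h1 : Tendsto (fun t => (D ^ 2 * ε ^ 2)⁻¹ * (r t)⁻¹) atTop (nhds 0) := by
      have := hrinf.inv_tendsto_atTop
      have h2 := this.const_mul ((D ^ 2 * ε ^ 2)⁻¹)
      simpa using h2
    have := (ENNReal.continuous_ofReal.tendsto 0).comp h1
    rw [ENNReal.ofReal_zero] at this
    exact this
  have hev : ∀ᶠ t in atTop, ℙ {ω | ε ≤ |CFR t ω - cfr t|} ≤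
      ENNReal.ofReal ((D ^ 2 * ε ^ 2)⁻¹ * (r t)⁻¹) := by
    filter_upwards [hrinf.eventually_ge_atTop 1] with t ht
    exact key t ht
  exact tendsto_of_tendsto_of_tendsto_of_le_of_le' tendsto_const_nhds hbound
    (Filter.Eventually.of_forall fun t => by simp) hev
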